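/- Let E be a complex vector space of finite dimension N ≥ 1, equipped with a quasi-norm ‖·‖, i.e. a function E → [0,∞) with ‖x‖ = 0 iff x = 0, ‖αx‖ = |α|·‖x‖ for all α ∈ ℂ and x ∈ E, and ‖x + y‖ ≤ K(‖x‖ + ‖y‖) for all x, y ∈ E, for some fixed constant K ≥ 1. Then there exist constants c1, c2 > 0, depending only on K, such that the entropy numbers of the identity map id : E → E satisfy: c1 ≤ e_k(id) ≤ c2 for all k ∈ ℕ with k ≤ 2N, and c1 · 2^{−(k−1)/(2N)} ≤ e_k(id) ≤ c2 · 2^{−(k−1)/(2N)} for all k ∈ ℕ with k > 2N. -/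

import Mathlib

open scoped ENNReal NNReal

noncomputable section

/-- `Q_{j,m} ⊆ Q = [0,1)^d` iff `0 ≤ m i < 2^j` for every coordinate `i`. -/
def inUnitCube (d j : ℕ) (m : Fin d → ℤ) : Prop :=
  ∀ i, 0 ≤ m i ∧ m i < 2 ^ j

/-- For `ν ≤ j`: `Q_{j,m} ⊆ Q_{ν,k}`. -/
def cubeSub (d j ν : ℕ) (m k : Fin d → ℤ) : Prop :=
  ∀ i, k i * 2 ^ (j - ν) ≤ m i ∧ m i < (k i + 1) * 2 ^ (j - ν)

/-- The finite-dimensional Morrey quasi-norm `‖· | m^{2^{jd}}_{u,p}‖` (`ℝ≥0∞`-valued),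
on coefficients indexed by the `m ∈ ℤ^d` with `Q_{j,m} ⊆ Q` (other coordinates are ignored). -/
def mNorm (d : ℕ) (u p : ℝ) (j : ℕ) (lam : (Fin d → ℤ) → ℂ) : ℝ≥0∞ :=
  ⨆ νk : {νk : ℕ × (Fin d → ℤ) // νk.1 ≤ j ∧ inUnitCube d νk.1 νk.2},
    (2 : ℝ≥0∞) ^ ((d : ℝ) * ((j : ℝ) - (νk.1.1 : ℝ)) * (1 / u - 1 / p)) *
      (∑' m : {m : Fin d → ℤ // cubeSub d j νk.1.1 m νk.1.2},
        ((‖lam m.1‖₊ : ℝ≥0∞)) ^ p) ^ (1 / p)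

/-- The `ℓ_q^{2^{jd}}` quasi-norm (`0 < q < ∞`) on level-`j` coefficients. -/
def lqNorm (d : ℕ) (q : ℝ) (j : ℕ) (lam : (Fin d → ℤ) → ℂ) : ℝ≥0∞ :=
  (∑' m : {m : Fin d → ℤ // inUnitCube d j m}, ((‖lam m.1‖₊ : ℝ≥0∞)) ^ q) ^ (1 / q)

/-- The quasi-norm of the sequence space `ñ^σ_{u,p,q}(Q)`, `q ∈ (0,∞]`. -/
def nNorm (d : ℕ) (σ u p : ℝ) (q : ℝ≥0∞) (lam : ℕ → (Fin d → ℤ) → ℂ) : ℝ≥0∞ :=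
  if q = ∞ then
    ⨆ j : ℕ, (2 : ℝ≥0∞) ^ ((j : ℝ) * (σ - d / u)) * mNorm d u p j (lam j)
  else
    (∑' j : ℕ, ((2 : ℝ≥0∞) ^ ((j : ℝ) * (σ - d / u)) * mNorm d u p j (lam j)) ^ q.toReal) ^
      (1 / q.toReal)

/-- `k`-th entropy number of the identity map between two quasi-norms on one ambient group:
the infimum of all `ε > 0` such that the `N₁`-unit ball is covered by `2^(k-1)` `N₂`-balls of
radius `ε`. -/
def entropyNumber {Λ : Type*} [AddCommGroup Λ] (N₁ N₂ : Λ → ℝ≥0∞) (k : ℕ) : ℝ≥0∞ :=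
  sInf {ε : ℝ≥0∞ | 0 < ε ∧ ∃ c : Fin (2 ^ (k - 1)) → Λ,
    ∀ x : Λ, N₁ x ≤ 1 → ∃ i, N₂ (x - c i) ≤ ε}

/-- Operator quasi-norm of the identity map between two quasi-norms on one ambient space:
the smallest `C` with `N₂ x ≤ C · N₁ x` for all `x`. -/
def opNorm {Λ : Type*} (N₁ N₂ : Λ → ℝ≥0∞) : ℝ≥0∞ :=
  sInf {C : ℝ≥0∞ | ∀ x, N₂ x ≤ C * N₁ x}

end

/-- Real-valued entropy numbers of the identity between two quasi-norms on one ambient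
group. -/
noncomputable def entropyNumberR {Λ : Type*} [AddCommGroup Λ] (N₁ N₂ : Λ → ℝ) (k : ℕ) : ℝ :=
  sInf {ε : ℝ | 0 < ε ∧ ∃ c : Fin (2 ^ (k - 1)) → Λ,
    ∀ x : Λ, N₁ x ≤ 1 → ∃ i, N₂ (x - c i) ≤ ε}


open MeasureTheory Set Pointwise

set_option maxHeartbeats 1000000

namespace Stmt11Aux

variable {N : ℕ} {K : ℝ} {nrm : (Fin N → ℂ) → ℝ}




lemma finrank_pi_complex : Module.finrank ℝ (Fin N → ℂ) = 2 * N := by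
  rw [Module.finrank_pi_fintype]
  simp [Complex.finrank_real_complex, mul_comm]

lemma nrm_real_smul (hhom : ∀ (a : ℂ) (x : Fin N → ℂ), nrm (a • x) = ‖a‖ * nrm x)
    (r : ℝ) (x : Fin N → ℂ) : nrm (r • x) = |r| * nrm x := by
  have h : r • x = (r : ℂ) • x := by
    funext i; simp [Pi.smul_apply, Complex.real_smul]
  rw [h, hhom]; simp

lemma smul_unit_ball
    (hhom : ∀ (a : ℂ) (x : Fin N → ℂ), nrm (a • x) = ‖a‖ * nrm x)
    {r : ℝ} (hr : 0 < r) :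
    r • {x : Fin N → ℂ | nrm x ≤ 1} = {x : Fin N → ℂ | nrm x ≤ r} := by
  ext x
  rw [Set.mem_smul_set_iff_inv_smul_mem₀ (ne_of_gt hr)]
  simp only [Set.mem_setOf_eq]
  rw [nrm_real_smul hhom, abs_of_nonneg (le_of_lt (inv_pos.mpr hr))]
  rw [inv_mul_le_one₀ hr]

lemma vol_smul_ball (s : Set (Fin N → ℂ)) {r : ℝ} (hr : 0 ≤ r) :
    volume (r • s) = ENNReal.ofReal (r ^ (2 * N)) * volume s := by
  rw [Measure.addHaar_smul_of_nonneg volume hr s, finrank_pi_complex]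

/-- The packing cardinality bound. -/
lemma packing_card (hK : 1 ≤ K)
    (hpos : ∀ x, 0 ≤ nrm x)
    (hzero : ∀ x, nrm x = 0 ↔ x = 0)
    (hhom : ∀ (a : ℂ) (x : Fin N → ℂ), nrm (a • x) = ‖a‖ * nrm x)
    (htri : ∀ x y, nrm (x + y) ≤ K * (nrm x + nrm y))
    {C c : ℝ} (hC : 0 < C) (hCup : ∀ x, nrm x ≤ C * ‖x‖)
    (hc : 0 < c) (hlow : ∀ x, c * ‖x‖ ≤ nrm x)
    (hv0 : volume {x : Fin N → ℂ | nrm x ≤ 1} ≠ 0)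
    (hvt : volume {x : Fin N → ℂ | nrm x ≤ 1} ≠ ⊤)
    {ε : ℝ} (hε : 0 < ε) (hε1 : ε ≤ 1)
    (s : Finset (Fin N → ℂ)) (hsB : ∀ x ∈ s, nrm x ≤ 1)
    (hsep : ∀ x ∈ s, ∀ y ∈ s, x ≠ y → ε < nrm (x - y)) :
    (s.card : ℝ) * (ε / (4 * K^2)) ^ (2 * N) ≤ (2 * K) ^ (2 * N) := by
  classical
  have hK0 : (0:ℝ) < K := lt_of_lt_of_le zero_lt_one hK
  set B : Set (Fin N → ℂ) := {x | nrm x ≤ 1} with hB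
  set δ : ℝ := ε / (4 * K^2) with hδ
  have hδ0 : 0 < δ := by positivity
  set ρ : ℝ := min (ε / (4 * K * C)) (δ / C) with hρ
  have hρ0 : 0 < ρ := by positivity
  have hρ1 : ρ ≤ ε / (4 * K * C) := min_le_left _ _
  have hρ2 : ρ ≤ δ / C := min_le_right _ _
  have hρC : C * ρ ≤ δ := by
    calc C * ρ ≤ C * (δ / C) := mul_le_mul_of_nonneg_left hρ2 hC.le
      _ = δ := by field_simp
  -- the disjoint open sets
  set A : (Fin N → ℂ) → Set (Fin N → ℂ) :=
    fun x => ⋃ b ∈ B, Metric.ball (x + δ • b) ρ with hA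
  have hAopen : ∀ x, IsOpen (A x) := by
    intro x
    exact isOpen_biUnion fun b _ => Metric.isOpen_ball
  have hAmem : ∀ x z, z ∈ A x ↔ ∃ b, nrm b ≤ 1 ∧ ‖z - (x + δ • b)‖ < ρ := by
    intro x z
    rw [hA]
    simp only [Set.mem_iUnion, Metric.mem_ball, dist_eq_norm, hB, Set.mem_setOf_eq, exists_prop]
  -- disjointness
  have hAdisj : (↑s : Set (Fin N → ℂ)).PairwiseDisjoint A := by
    intro x hx y hy hxy
    rw [Function.onFun, Set.disjoint_left]
    intro z hzx hzy
    obtain ⟨b, hb, hwb⟩ := (hAmem x z).mp hzx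
    obtain ⟨b', hb', hwb'⟩ := (hAmem y z).mp hzy
    have hsepxy := hsep x (by exact_mod_cast hx) y (by exact_mod_cast hy) hxy
    -- x - y = δ • (b' - b) + ((z - (y + δ•b')) - (z - (x + δ•b))) ... compute
    have hid : x - y = δ • (b' - b) + ((z - (y + δ • b')) - (z - (x + δ • b))) := by
      simp only [smul_sub]
      abel
    have h1 : nrm (δ • (b' - b)) ≤ 2 * K * δ := by
      rw [nrm_real_smul hhom, abs_of_pos hδ0]
      have : nrm (b' - b) ≤ K * (nrm b' + nrm (-b)) := by
        have := htri b' (-b)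
        simpa [sub_eq_add_neg] using this
      have hnb : nrm (-b) = nrm b := by
        have := hhom (-1) b; simpa using this
      rw [hnb] at this
      have hbb : nrm (b' - b) ≤ 2 * K := by nlinarith
      calc δ * nrm (b' - b) ≤ δ * (2 * K) := mul_le_mul_of_nonneg_left hbb hδ0.le
        _ = 2 * K * δ := by ring
    have h2 : nrm ((z - (y + δ • b')) - (z - (x + δ • b))) ≤ C * (2 * ρ) := by
      calc nrm ((z - (y + δ • b')) - (z - (x + δ • b)))
          ≤ C * ‖(z - (y + δ • b')) - (z - (x + δ • b))‖ := hCup _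
        _ ≤ C * (2 * ρ) := by
            apply mul_le_mul_of_nonneg_left _ hC.le
            calc ‖(z - (y + δ • b')) - (z - (x + δ • b))‖
                ≤ ‖z - (y + δ • b')‖ + ‖z - (x + δ • b)‖ := norm_sub_le _ _
              _ ≤ 2 * ρ := by linarith
    have h3 : nrm (x - y) ≤ K * (2 * K * δ + C * (2 * ρ)) := by
      rw [hid]
      calc nrm (δ • (b' - b) + ((z - (y + δ • b')) - (z - (x + δ • b))))
          ≤ K * (nrm (δ • (b' - b)) + nrm ((z - (y + δ • b')) - (z - (x + δ • b)))) := htri _ _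
        _ ≤ K * (2 * K * δ + C * (2 * ρ)) := by nlinarith
    -- K * (2Kδ + 2Cρ) ≤ ε/2 + ε/2 = ε
    have h4 : K * (2 * K * δ) = ε / 2 := by
      rw [hδ]; field_simp; ring
    have h5 : K * (C * (2 * ρ)) ≤ ε / 2 := by
      have : ρ ≤ ε / (4 * K * C) := hρ1
      calc K * (C * (2 * ρ)) ≤ K * (C * (2 * (ε / (4 * K * C)))) := by nlinarith
        _ = ε / 2 := by field_simp; ring
    have : nrm (x - y) ≤ ε := by nlinarith
    linarith [hsepxy]
  -- each A x contains a translate of δ • B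
  have hTsub : ∀ x, (fun z => z + (-x)) ⁻¹' (δ • B) ⊆ A x := by
    intro x z hz
    simp only [Set.mem_preimage] at hz
    rw [smul_unit_ball hhom hδ0] at hz
    simp only [Set.mem_setOf_eq] at hz
    rw [hAmem]
    refine ⟨δ⁻¹ • (z - x), ?_, ?_⟩
    · rw [nrm_real_smul hhom, abs_of_pos (inv_pos.mpr hδ0)]
      rw [inv_mul_le_one₀ hδ0]
      simpa [sub_eq_add_neg] using hz
    · rw [smul_inv_smul₀ (ne_of_gt hδ0)]
      simp [hρ0]
  -- each A x, x ∈ s, is contained in (2K) • B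
  have hAsub : ∀ x ∈ s, A x ⊆ (2 * K) • B := by
    intro x hxs z hz
    rw [smul_unit_ball hhom (by positivity)]
    obtain ⟨b, hb, hw⟩ := (hAmem x z).mp hz
    have hz2 : z = x + (δ • b + (z - (x + δ • b))) := by abel
    have h1 : nrm (δ • b + (z - (x + δ • b))) ≤ K * (δ * nrm b + C * ρ) := by
      calc nrm (δ • b + (z - (x + δ • b)))
          ≤ K * (nrm (δ • b) + nrm (z - (x + δ • b))) := htri _ _
        _ ≤ K * (δ * nrm b + C * ρ) := by
            have e1 : nrm (δ • b) = δ * nrm b := by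
              rw [nrm_real_smul hhom, abs_of_pos hδ0]
            have e2 : nrm (z - (x + δ • b)) ≤ C * ρ := by
              calc nrm (z - (x + δ • b)) ≤ C * ‖z - (x + δ • b)‖ := hCup _
                _ ≤ C * ρ := by nlinarith
            rw [e1]
            nlinarith
    have hxB : nrm x ≤ 1 := hsB x hxs
    simp only [Set.mem_setOf_eq]
    have h6 : nrm z ≤ K * (nrm x + nrm (δ • b + (z - (x + δ • b)))) := by
      conv_lhs => rw [hz2]
      exact htri _ _
    -- δ * nrm b ≤ δ, C * ρ ≤ δ, so inner ≤ K * 2δ; total ≤ K(1 + 2Kδ) = K + ε/2 ≤ 2K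
    have h7 : δ * nrm b ≤ δ := by nlinarith
    have h8 : K * (δ * nrm b + C * ρ) ≤ 2 * K * δ := by nlinarith
    have h9 : 2 * K * δ * K = ε / 2 := by rw [hδ]; field_simp; ring
    have h10 : ε / 2 ≤ K := by linarith
    nlinarith
  -- volume computation
  have hsum : (s.card : ℝ≥0∞) * (ENNReal.ofReal (δ ^ (2*N)) * volume B)
      ≤ ENNReal.ofReal ((2*K) ^ (2*N)) * volume B := by
    calc (s.card : ℝ≥0∞) * (ENNReal.ofReal (δ ^ (2*N)) * volume B)
        = ∑ _x ∈ s, (ENNReal.ofReal (δ ^ (2*N)) * volume B) := by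
          rw [Finset.sum_const, nsmul_eq_mul]
      _ ≤ ∑ x ∈ s, volume (A x) := by
          apply Finset.sum_le_sum
          intro x hx
          calc ENNReal.ofReal (δ ^ (2*N)) * volume B
              = volume ((fun z => z + (-x)) ⁻¹' (δ • B)) := by
                rw [measure_preimage_add_right volume (-x) (δ • B), vol_smul_ball B hδ0.le]
            _ ≤ volume (A x) := measure_mono (hTsub x)
      _ = volume (⋃ x ∈ s, A x) := by
          rw [measure_biUnion_finset hAdisj (fun x _ => (hAopen x).measurableSet)]
      _ ≤ volume ((2 * K) • B) := by
          apply measure_mono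
          exact Set.iUnion₂_subset hAsub
      _ = ENNReal.ofReal ((2*K) ^ (2*N)) * volume B := vol_smul_ball B (by positivity)
  have hkey : (s.card : ℝ≥0∞) * ENNReal.ofReal (δ ^ (2*N)) ≤ ENNReal.ofReal ((2*K) ^ (2*N)) := by
    rw [← ENNReal.mul_le_mul_iff_left (hv0) (hvt)]
    calc (s.card : ℝ≥0∞) * ENNReal.ofReal (δ ^ (2*N)) * volume B
        = (s.card : ℝ≥0∞) * (ENNReal.ofReal (δ ^ (2*N)) * volume B) := by ring
      _ ≤ ENNReal.ofReal ((2*K) ^ (2*N)) * volume B := hsum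
  have : ENNReal.ofReal ((s.card : ℝ) * δ ^ (2*N)) ≤ ENNReal.ofReal ((2*K) ^ (2*N)) := by
    rw [ENNReal.ofReal_mul (by positivity)]
    rw [ENNReal.ofReal_natCast] at *
    exact hkey
  rw [ENNReal.ofReal_le_ofReal_iff (by positivity)] at this
  exact this



section basic

variable (hK : 1 ≤ K)
  (hpos : ∀ x, 0 ≤ nrm x)
  (hzero : ∀ x, nrm x = 0 ↔ x = 0)
  (hhom : ∀ (a : ℂ) (x : Fin N → ℂ), nrm (a • x) = ‖a‖ * nrm x)
  (htri : ∀ x y, nrm (x + y) ≤ K * (nrm x + nrm y))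

include hzero in
lemma nrm_zero : nrm 0 = 0 := (hzero 0).mpr rfl

include hhom in
lemma nrm_neg (x : Fin N → ℂ) : nrm (-x) = nrm x := by
  have := hhom (-1) x
  simpa using this

include hK hzero hpos htri in
lemma nrm_sum {ι : Type*} (s : Finset ι) (f : ι → Fin N → ℂ) :
    nrm (∑ i ∈ s, f i) ≤ K ^ s.card * ∑ i ∈ s, nrm (f i) := by
  classical
  induction s using Finset.cons_induction with
  | empty => simp [nrm_zero hzero]
  | cons a s ha ih =>
    rw [Finset.sum_cons, Finset.sum_cons, Finset.card_cons]
    have h1 : nrm (f a + ∑ i ∈ s, f i) ≤ K * (nrm (f a) + nrm (∑ i ∈ s, f i)) := htri _ _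
    have hK0 : (0:ℝ) ≤ K := le_trans zero_le_one hK
    have hKn : (1:ℝ) ≤ K ^ s.card := one_le_pow₀ hK
    have h2 : nrm (f a) + nrm (∑ i ∈ s, f i) ≤ K ^ s.card * (nrm (f a) + ∑ i ∈ s, nrm (f i)) := by
      have h3 : nrm (f a) ≤ K ^ s.card * nrm (f a) := le_mul_of_one_le_left (hpos _) hKn
      have h4 : nrm (∑ i ∈ s, f i) ≤ K ^ s.card * ∑ i ∈ s, nrm (f i) := ih
      calc nrm (f a) + nrm (∑ i ∈ s, f i)
          ≤ K ^ s.card * nrm (f a) + K ^ s.card * ∑ i ∈ s, nrm (f i) := add_le_add h3 h4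
        _ = K ^ s.card * (nrm (f a) + ∑ i ∈ s, nrm (f i)) := by ring
    calc nrm (f a + ∑ i ∈ s, f i) ≤ K * (nrm (f a) + nrm (∑ i ∈ s, f i)) := h1
      _ ≤ K * (K ^ s.card * (nrm (f a) + ∑ i ∈ s, nrm (f i))) := by
          apply mul_le_mul_of_nonneg_left h2 hK0
      _ = K ^ (s.card + 1) * (nrm (f a) + ∑ i ∈ s, nrm (f i)) := by ring

include hK hpos hzero hhom htri in
lemma nrm_upper : ∃ C : ℝ, 0 < C ∧ ∀ x, nrm x ≤ C * ‖x‖ := by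
  classical
  refine ⟨K ^ N * (∑ i, nrm (Pi.single i 1)) + 1, ?_, ?_⟩
  · have hK0 : (0:ℝ) < K ^ N := pow_pos (lt_of_lt_of_le zero_lt_one hK) _
    have : 0 ≤ ∑ i, nrm (Pi.single i 1) := Finset.sum_nonneg fun i _ => hpos _
    nlinarith
  · intro x
    have hx : x = ∑ i, Pi.single i (x i) := (Finset.univ_sum_single x).symm
    have hsingle : ∀ i, (Pi.single i (x i) : Fin N → ℂ) = (x i) • (Pi.single i (1:ℂ) : Fin N → ℂ) := by
      intro i; funext j
      by_cases h : j = i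
      · subst h; simp
      · simp [Pi.single_apply, h]
    have h1 : nrm x ≤ K ^ N * ∑ i, nrm (Pi.single i (x i)) := by
      rw [hx]
      simpa using nrm_sum hK hpos hzero htri Finset.univ (fun i => Pi.single i (x i))
    have h2 : ∀ i : Fin N, nrm (Pi.single i (x i)) ≤ ‖x‖ * nrm (Pi.single i (1:ℂ)) := by
      intro i
      rw [hsingle i, hhom]
      exact mul_le_mul_of_nonneg_right (norm_le_pi_norm x i) (hpos _)
    have h3 : ∑ i, nrm (Pi.single i (x i)) ≤ ‖x‖ * ∑ i, nrm (Pi.single i (1:ℂ)) := by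
      rw [Finset.mul_sum]
      exact Finset.sum_le_sum fun i _ => h2 i
    have hK0 : (0:ℝ) ≤ K ^ N := pow_nonneg (le_trans zero_le_one hK) _
    calc nrm x ≤ K ^ N * ∑ i, nrm (Pi.single i (x i)) := h1
      _ ≤ K ^ N * (‖x‖ * ∑ i, nrm (Pi.single i (1:ℂ))) := by
          exact mul_le_mul_of_nonneg_left h3 hK0
      _ = (K ^ N * ∑ i, nrm (Pi.single i (1:ℂ))) * ‖x‖ := by ring
      _ ≤ (K ^ N * ∑ i, nrm (Pi.single i (1:ℂ)) + 1) * ‖x‖ := by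
          apply mul_le_mul_of_nonneg_right _ (norm_nonneg x)
          linarith

end basic





lemma nrm_lower (hN : 0 < N) (hK : 1 ≤ K)
    (hpos : ∀ x, 0 ≤ nrm x)
    (hzero : ∀ x, nrm x = 0 ↔ x = 0)
    (hhom : ∀ (a : ℂ) (x : Fin N → ℂ), nrm (a • x) = ‖a‖ * nrm x)
    (htri : ∀ x y, nrm (x + y) ≤ K * (nrm x + nrm y))
    {C : ℝ} (hC : 0 < C) (hCup : ∀ x, nrm x ≤ C * ‖x‖) :
    ∃ c : ℝ, 0 < c ∧ ∀ x, c * ‖x‖ ≤ nrm x := by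
  classical
  have hK0 : (0:ℝ) < K := lt_of_lt_of_le zero_lt_one hK
  set S : Set (Fin N → ℂ) := Metric.sphere 0 1 with hS
  have hScompact : IsCompact S := isCompact_sphere 0 1
  -- open cover
  set U : (Fin N → ℂ) → Set (Fin N → ℂ) := fun x => Metric.ball x (nrm x / (2 * K * C)) with hU
  have hUopen : ∀ x, IsOpen (U x) := fun x => Metric.isOpen_ball
  have hcover : S ⊆ ⋃ x ∈ S, U x := by
    intro y hy
    have hy0 : y ≠ 0 := by
      intro h
      rw [hS] at hy
      simp [h] at hy
    have : 0 < nrm y := by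
      rcases lt_or_eq_of_le (hpos y) with h | h
      · exact h
      · exact absurd ((hzero y).mp h.symm) hy0
    refine Set.mem_biUnion hy ?_
    rw [hU]
    simp only [Metric.mem_ball, dist_self]
    positivity
  obtain ⟨t, ht⟩ := hScompact.elim_finite_subcover_image (fun x _ => hUopen x) hcover
  obtain ⟨htS, htfin, htcov⟩ := ht
  -- key claim
  have key : ∀ y ∈ S, ∃ x ∈ t, 0 < nrm x ∧ nrm x / (2 * K) ≤ nrm y := by
    intro y hy
    obtain ⟨x, hxt, hyx⟩ := Set.mem_iUnion₂.mp (htcov hy)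
    rw [hU] at hyx
    simp only [Metric.mem_ball] at hyx
    have hxpos : 0 < nrm x := by
      by_contra h
      push_neg at h
      have : nrm x = 0 := le_antisymm h (hpos x)
      rw [this] at hyx
      simp at hyx
      exact absurd hyx (not_lt.mpr dist_nonneg)
    refine ⟨x, hxt, hxpos, ?_⟩
    -- nrm x ≤ K (nrm y + nrm (x - y)) ≤ K nrm y + K C ‖x - y‖ < K nrm y + nrm x / 2
    have h1 : nrm x ≤ K * (nrm y + nrm (x - y)) := by
      have := htri y (x - y)
      simpa [add_sub_cancel] using this
    have h2 : nrm (x - y) ≤ C * ‖x - y‖ := hCup _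
    have h3 : ‖x - y‖ = dist y x := by rw [dist_eq_norm, norm_sub_rev]
    have h4 : dist y x < nrm x / (2 * K * C) := hyx
    have h5 : K * C * dist y x < nrm x / 2 := by
      have := mul_lt_mul_of_pos_left h4 (by positivity : (0:ℝ) < K * C)
      calc K * C * dist y x < K * C * (nrm x / (2 * K * C)) := this
        _ = nrm x / 2 := by field_simp
    have : nrm x < K * nrm y + nrm x / 2 := by
      calc nrm x ≤ K * nrm y + K * nrm (x - y) := by linarith [h1]
        _ ≤ K * nrm y + K * (C * ‖x - y‖) := by nlinarith [hpos (x - y)]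
        _ = K * nrm y + K * C * dist y x := by rw [h3]; ring
        _ < K * nrm y + nrm x / 2 := by linarith
    rw [div_le_iff₀ (by positivity : (0:ℝ) < 2 * K)]
    nlinarith [hpos y]
  -- t' : positive elements of t
  have : Nontrivial (Fin N → ℂ) := by
    have : Nonempty (Fin N) := ⟨⟨0, hN⟩⟩
    infer_instance
  obtain ⟨y0, hy0⟩ := exists_norm_eq (Fin N → ℂ) (zero_le_one (α := ℝ))
  have hy0S : y0 ∈ S := by simp [hS, hy0]
  obtain ⟨x0, hx0t, hx0pos, _⟩ := key y0 hy0S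
  set t' : Finset (Fin N → ℂ) := htfin.toFinset.filter (fun x => 0 < nrm x) with ht'
  have hx0t' : x0 ∈ t' := by
    rw [ht', Finset.mem_filter]
    exact ⟨htfin.mem_toFinset.mpr hx0t, hx0pos⟩
  have ht'ne : t'.Nonempty := ⟨x0, hx0t'⟩
  set c0 : ℝ := t'.inf' ht'ne (fun x => nrm x / (2 * K)) with hc0
  have hc0pos : 0 < c0 := by
    rw [hc0]
    rw [Finset.lt_inf'_iff]
    intro x hx
    rw [ht', Finset.mem_filter] at hx
    have := hx.2
    positivity
  have hsphere : ∀ y ∈ S, c0 ≤ nrm y := by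
    intro y hy
    obtain ⟨x, hxt, hxpos, hxy⟩ := key y hy
    have hxt' : x ∈ t' := by
      rw [ht', Finset.mem_filter]
      exact ⟨htfin.mem_toFinset.mpr hxt, hxpos⟩
    calc c0 ≤ nrm x / (2 * K) := Finset.inf'_le _ hxt'
      _ ≤ nrm y := hxy
  refine ⟨c0, hc0pos, ?_⟩
  intro x
  by_cases hx : x = 0
  · subst hx
    simp [(hzero 0).mpr rfl]
  · have hxn : (0:ℝ) < ‖x‖ := norm_pos_iff.mpr hx
    set y : Fin N → ℂ := ((‖x‖⁻¹ : ℝ) : ℂ) • x with hy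
    have hyS : y ∈ S := by
      rw [hS]
      simp only [Metric.mem_sphere, dist_zero_right, hy, norm_smul]
      rw [Complex.norm_real]
      rw [Real.norm_eq_abs, abs_of_nonneg (by positivity)]
      field_simp
    have hnrmy : nrm y = ‖x‖⁻¹ * nrm x := by
      rw [hy, hhom]
      rw [Complex.norm_real, Real.norm_eq_abs, abs_of_nonneg (by positivity)]
    have := hsphere y hyS
    rw [hnrmy] at this
    calc c0 * ‖x‖ ≤ (‖x‖⁻¹ * nrm x) * ‖x‖ := by
          apply mul_le_mul_of_nonneg_right this (norm_nonneg x)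
      _ = nrm x := by field_simp


lemma vol_B_pos {C : ℝ} (hC : 0 < C) (hCup : ∀ x, nrm x ≤ C * ‖x‖) :
    0 < volume {x : Fin N → ℂ | nrm x ≤ 1} := by
  have hsub : Metric.ball (0 : Fin N → ℂ) C⁻¹ ⊆ {x | nrm x ≤ 1} := by
    intro x hx
    simp only [Metric.mem_ball, dist_zero_right] at hx
    have := hCup x
    simp only [Set.mem_setOf_eq]
    calc nrm x ≤ C * ‖x‖ := this
      _ ≤ C * C⁻¹ := by nlinarith
      _ = 1 := by field_simp
  calc (0:ℝ≥0∞) < volume (Metric.ball (0 : Fin N → ℂ) C⁻¹) :=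
        Metric.measure_ball_pos volume 0 (inv_pos.mpr hC)
    _ ≤ volume {x | nrm x ≤ 1} := measure_mono hsub

lemma vol_B_lt_top {c : ℝ} (hc : 0 < c) (hlow : ∀ x, c * ‖x‖ ≤ nrm x) :
    volume {x : Fin N → ℂ | nrm x ≤ 1} < ⊤ := by
  have hsub : {x : Fin N → ℂ | nrm x ≤ 1} ⊆ Metric.closedBall 0 c⁻¹ := by
    intro x hx
    simp only [Set.mem_setOf_eq] at hx
    have := hlow x
    simp only [Metric.mem_closedBall, dist_zero_right]
    have h1 : c * ‖x‖ ≤ 1 := le_trans this hx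
    calc ‖x‖ = c⁻¹ * (c * ‖x‖) := by field_simp
      _ ≤ c⁻¹ * 1 := mul_le_mul_of_nonneg_left h1 (le_of_lt (inv_pos.mpr hc))
      _ = c⁻¹ := mul_one _
  calc volume {x : Fin N → ℂ | nrm x ≤ 1} ≤ volume (Metric.closedBall (0:Fin N → ℂ) c⁻¹) :=
        measure_mono hsub
    _ < ⊤ := MeasureTheory.measure_closedBall_lt_top

lemma entropy_lower (hN : 0 < N) (hK : 1 ≤ K)
    (hpos : ∀ x, 0 ≤ nrm x)
    (hzero : ∀ x, nrm x = 0 ↔ x = 0)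
    (hhom : ∀ (a : ℂ) (x : Fin N → ℂ), nrm (a • x) = ‖a‖ * nrm x)
    (htri : ∀ x y, nrm (x + y) ≤ K * (nrm x + nrm y))
    {C c : ℝ} (hC : 0 < C) (hCup : ∀ x, nrm x ≤ C * ‖x‖)
    (hc : 0 < c) (hlow : ∀ x, c * ‖x‖ ≤ nrm x)
    (k : ℕ) (hk : 0 < k) :
    (2:ℝ) ^ (-(((k : ℝ) - 1) / (2 * N))) ≤ entropyNumberR nrm nrm k := by
  set B : Set (Fin N → ℂ) := {x | nrm x ≤ 1} with hB
  have hv0 : volume B ≠ 0 := (vol_B_pos hC hCup).ne'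
  have hvt : volume B ≠ ⊤ := (vol_B_lt_top hc hlow).ne
  apply le_csInf
  · refine ⟨1, zero_lt_one, fun _ => 0, fun x hx => ?_⟩
    exact ⟨⟨0, Nat.pow_pos (by norm_num)⟩, by simpa using hx⟩
  · rintro ε ⟨hε, cc, hcc⟩
    -- B covered by the 2^(k-1) translates of ε • B
    have hcover : B ⊆ ⋃ i : Fin (2 ^ (k-1)), (fun x => x + (-(cc i))) ⁻¹' (ε • B) := by
      intro x hx
      obtain ⟨i, hi⟩ := hcc x hx
      refine Set.mem_iUnion.mpr ⟨i, ?_⟩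
      simp only [Set.mem_preimage]
      rw [smul_unit_ball hhom hε]
      simpa [sub_eq_add_neg] using hi
    have hmeas : volume B ≤ (2 ^ (k-1) : ℕ) * (ENNReal.ofReal (ε ^ (2 * N)) * volume B) := by
      calc volume B ≤ volume (⋃ i : Fin (2 ^ (k-1)), (fun x => x + (-(cc i))) ⁻¹' (ε • B)) :=
            measure_mono hcover
        _ ≤ ∑ i : Fin (2 ^ (k-1)), volume ((fun x => x + (-(cc i))) ⁻¹' (ε • B)) := by
            rw [← tsum_fintype (L := SummationFilter.unconditional _)]
            exact measure_iUnion_le _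
        _ = ∑ _i : Fin (2 ^ (k-1)), ENNReal.ofReal (ε ^ (2 * N)) * volume B := by
            apply Finset.sum_congr rfl
            intro i _
            rw [measure_preimage_add_right volume (-(cc i)) (ε • B)]
            exact vol_smul_ball B hε.le
        _ = (2 ^ (k-1) : ℕ) * (ENNReal.ofReal (ε ^ (2 * N)) * volume B) := by
            rw [Finset.sum_const, Finset.card_univ, Fintype.card_fin, nsmul_eq_mul]
    -- cancel volume B
    have hkey : (1 : ℝ≥0∞) ≤ (2 ^ (k-1) : ℕ) * ENNReal.ofReal (ε ^ (2 * N)) := by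
      rw [← ENNReal.mul_le_mul_iff_left hv0 hvt]
      calc (1:ℝ≥0∞) * volume B = volume B := one_mul _
        _ ≤ (2 ^ (k-1) : ℕ) * (ENNReal.ofReal (ε ^ (2 * N)) * volume B) := hmeas
        _ = (2 ^ (k-1) : ℕ) * ENNReal.ofReal (ε ^ (2 * N)) * volume B := by ring
    -- to reals
    have hreal : (1:ℝ) ≤ (2:ℝ) ^ (k-1) * ε ^ (2 * N) := by
      have h1 : ((2 ^ (k-1) : ℕ) : ℝ≥0∞) = ENNReal.ofReal ((2:ℝ) ^ (k-1)) := by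
        rw [← ENNReal.ofReal_natCast]
        norm_num
      rw [h1, ← ENNReal.ofReal_mul (by positivity)] at hkey
      exact ENNReal.one_le_ofReal.mp hkey
    -- now real arithmetic
    have h2N : (0:ℝ) < 2 * N := by positivity
    have hεpow : (2:ℝ) ^ (-((k:ℝ) - 1)) ≤ ε ^ (2 * N : ℕ) := by
      have hcast : ((2:ℝ) ^ (k-1) : ℝ) = (2:ℝ) ^ ((k:ℝ) - 1) := by
        rw [← Real.rpow_natCast 2 (k-1)]
        congr 1
        rw [Nat.cast_sub hk, Nat.cast_one]
      rw [Real.rpow_neg (by norm_num), ← hcast]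
      rw [inv_le_iff_one_le_mul₀ (by positivity)]
      linarith [hreal]
    have : ((2:ℝ) ^ (-((k:ℝ) - 1))) ^ ((2 * N : ℝ)⁻¹) ≤ (ε ^ (2 * N : ℕ)) ^ ((2 * N : ℝ)⁻¹) :=
      Real.rpow_le_rpow (by positivity) hεpow (by positivity)
    calc (2:ℝ) ^ (-(((k : ℝ) - 1) / (2 * N)))
        = ((2:ℝ) ^ (-((k:ℝ) - 1))) ^ ((2 * N : ℝ)⁻¹) := by
          rw [← Real.rpow_mul (by norm_num)]
          congr 1
          field_simp
      _ ≤ (ε ^ (2 * N : ℕ)) ^ ((2 * N : ℝ)⁻¹) := this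
      _ = ε := by
          rw [← Real.rpow_natCast ε (2 * N), ← Real.rpow_mul hε.le]
          rw [Nat.cast_mul, Nat.cast_ofNat]
          rw [mul_inv_cancel₀ (ne_of_gt h2N), Real.rpow_one]








lemma entropy_upper (hN : 0 < N) (hK : 1 ≤ K)
    (hpos : ∀ x, 0 ≤ nrm x)
    (hzero : ∀ x, nrm x = 0 ↔ x = 0)
    (hhom : ∀ (a : ℂ) (x : Fin N → ℂ), nrm (a • x) = ‖a‖ * nrm x)
    (htri : ∀ x y, nrm (x + y) ≤ K * (nrm x + nrm y))
    {C c : ℝ} (hC : 0 < C) (hCup : ∀ x, nrm x ≤ C * ‖x‖)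
    (hc : 0 < c) (hlow : ∀ x, c * ‖x‖ ≤ nrm x)
    (hv0 : volume {x : Fin N → ℂ | nrm x ≤ 1} ≠ 0)
    (hvt : volume {x : Fin N → ℂ | nrm x ≤ 1} ≠ ⊤)
    (k : ℕ) (hk : 0 < k) :
    entropyNumberR nrm nrm k ≤ 8 * K^3 * (2:ℝ) ^ (-(((k : ℝ) - 1) / (2 * N))) := by
  classical
  have hK0 : (0:ℝ) < K := lt_of_lt_of_le zero_lt_one hK
  set θ : ℝ := ((k : ℝ) - 1) / (2 * N) with hθ
  have hθ0 : 0 ≤ θ := by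
    rw [hθ]
    apply div_nonneg _ (by positivity)
    have : (1:ℝ) ≤ (k:ℝ) := by exact_mod_cast hk
    linarith
  set ε : ℝ := 8 * K^3 * (2:ℝ) ^ (-θ) with hε'
  have hεpos : 0 < ε := by
    rw [hε']
    positivity
  have hbdd : BddBelow {ε : ℝ | 0 < ε ∧ ∃ cc : Fin (2 ^ (k - 1)) → (Fin N → ℂ),
      ∀ x, nrm x ≤ 1 → ∃ i, nrm (x - cc i) ≤ ε} := ⟨0, fun t ht => ht.1.le⟩
  have hmem1 : (1:ℝ) ∈ {ε : ℝ | 0 < ε ∧ ∃ cc : Fin (2 ^ (k - 1)) → (Fin N → ℂ),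
      ∀ x, nrm x ≤ 1 → ∃ i, nrm (x - cc i) ≤ ε} := by
    refine ⟨zero_lt_one, fun _ => 0, fun x hx => ?_⟩
    exact ⟨⟨0, Nat.pow_pos (by norm_num)⟩, by simpa using hx⟩
  by_cases h1 : 1 ≤ ε
  · calc entropyNumberR nrm nrm k ≤ 1 := csInf_le hbdd hmem1
      _ ≤ ε := h1
  · push_neg at h1
    -- packing card bound
    have hcard : ∀ s : Finset (Fin N → ℂ), (∀ x ∈ s, nrm x ≤ 1) →
        (∀ x ∈ s, ∀ y ∈ s, x ≠ y → ε < nrm (x - y)) → s.card ≤ 2 ^ (k - 1) := by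
      intro s hsB hsep
      have hpack := packing_card hK hpos hzero hhom htri hC hCup hc hlow hv0 hvt
        hεpos h1.le s hsB hsep
      set δ : ℝ := ε / (4 * K^2) with hδ
      have hδ0 : 0 < δ := by positivity
      have hratio : 2 * K / δ = (2:ℝ) ^ θ := by
        rw [hδ, hε']
        rw [Real.rpow_neg (by norm_num)]
        field_simp
        ring
      have h2 : (s.card : ℝ) ≤ (2 * K / δ) ^ (2 * N) := by
        rw [div_pow, le_div_iff₀ (by positivity)]
        exact hpack
      have h3 : ((2 * K / δ) : ℝ) ^ (2 * N) = (2:ℝ) ^ ((k:ℝ) - 1) := by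
        rw [hratio, ← Real.rpow_natCast ((2:ℝ) ^ θ) (2 * N), ← Real.rpow_mul (by norm_num)]
        congr 1
        rw [hθ]
        push_cast
        field_simp
      have h4 : ((2 ^ (k-1) : ℕ) : ℝ) = (2:ℝ) ^ ((k:ℝ) - 1) := by
        push_cast
        rw [← Real.rpow_natCast 2 (k-1)]
        congr 1
        rw [Nat.cast_sub hk, Nat.cast_one]
      have h5 : (s.card : ℝ) ≤ ((2 ^ (k-1) : ℕ) : ℝ) :=
        h2.trans (le_of_eq (h3.trans h4.symm))
      exact_mod_cast h5
    -- maximal packing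
    set P : Finset (Fin N → ℂ) → Prop := fun s => (∀ x ∈ s, nrm x ≤ 1) ∧
      (∀ x ∈ s, ∀ y ∈ s, x ≠ y → ε < nrm (x - y)) with hP
    set A : Set ℕ := {n | ∃ s : Finset (Fin N → ℂ), P s ∧ s.card = n} with hA
    have hA0 : 0 ∈ A := ⟨∅, ⟨fun x hx => absurd hx (Finset.notMem_empty x),
      fun x hx => absurd hx (Finset.notMem_empty x)⟩, Finset.card_empty⟩
    have hAbdd : BddAbove A := by
      refine ⟨2 ^ (k-1), fun n hn => ?_⟩
      obtain ⟨s, ⟨hs1, hs2⟩, rfl⟩ := hn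
      exact hcard s hs1 hs2
    obtain ⟨s₀, hs₀P, hs₀card⟩ := Nat.sSup_mem ⟨0, hA0⟩ hAbdd
    have hs₀le : s₀.card ≤ 2 ^ (k - 1) := hcard s₀ hs₀P.1 hs₀P.2
    -- maximality: every point of B is within ε of s₀
    have hcover : ∀ y, nrm y ≤ 1 → ∃ x ∈ s₀, nrm (y - x) ≤ ε := by
      intro y hy
      by_contra hcon
      push_neg at hcon
      have hynotin : y ∉ s₀ := by
        intro hy'
        have := hcon y hy'
        rw [sub_self, (hzero 0).mpr rfl] at this
        linarith
      have hins : P (insert y s₀) := by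
        constructor
        · intro x hx
          rcases Finset.mem_insert.mp hx with rfl | hx
          · exact hy
          · exact hs₀P.1 x hx
        · intro a ha b hb hab
          have hsym : ∀ w, w ∈ s₀ → ε < nrm (y - w) ∧ ε < nrm (w - y) := by
            intro w hw
            have h := hcon w hw
            have hneg : nrm (w - y) = nrm (y - w) := by
              have := hhom (-1) (y - w)
              simp only [neg_smul, one_smul, neg_sub] at this
              simpa using this
            exact ⟨h, by rw [hneg]; exact h⟩
          rcases Finset.mem_insert.mp ha with rfl | ha'
          · rcases Finset.mem_insert.mp hb with rfl | hb'
            · exact absurd rfl hab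
            · exact (hsym b hb').1
          · rcases Finset.mem_insert.mp hb with rfl | hb'
            · exact (hsym a ha').2
            · exact hs₀P.2 a ha' b hb' hab
      have : s₀.card + 1 ∈ A := by
        refine ⟨insert y s₀, hins, ?_⟩
        rw [Finset.card_insert_of_notMem hynotin]
      have hle := le_csSup hAbdd this
      rw [hs₀card] at hle
      omega
    -- build the covering function
    have hεmem : ε ∈ {ε : ℝ | 0 < ε ∧ ∃ cc : Fin (2 ^ (k - 1)) → (Fin N → ℂ),
        ∀ x, nrm x ≤ 1 → ∃ i, nrm (x - cc i) ≤ ε} := by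
      refine ⟨hεpos, fun i => s₀.toList.getD i 0, fun x hx => ?_⟩
      obtain ⟨y, hys, hyx⟩ := hcover x hx
      have hyl : y ∈ s₀.toList := Finset.mem_toList.mpr hys
      have hidx : s₀.toList.idxOf y < s₀.toList.length := List.idxOf_lt_length_iff.mpr hyl
      have hlen : s₀.toList.length = s₀.card := Finset.length_toList _
      have hlt : s₀.toList.idxOf y < 2 ^ (k-1) := by
        rw [hlen] at hidx
        exact lt_of_lt_of_le hidx hs₀le
      refine ⟨⟨s₀.toList.idxOf y, hlt⟩, ?_⟩
      have : s₀.toList.getD (s₀.toList.idxOf y) 0 = y := by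
        rw [List.getD_eq_getElem _ _ hidx]
        exact List.getElem_idxOf hidx
      simp only [this]
      exact hyx
    exact csInf_le hbdd hεmem



lemma entropy_transfer {E Λ : Type*} [AddCommGroup E] [Module ℂ E]
    [AddCommGroup Λ] [Module ℂ Λ] (e : E ≃ₗ[ℂ] Λ) (nrm : E → ℝ) (k : ℕ) :
    entropyNumberR nrm nrm k = entropyNumberR (nrm ∘ e.symm) (nrm ∘ e.symm) k := by
  unfold entropyNumberR
  congr 1
  ext ε
  simp only [Set.mem_setOf_eq, Function.comp_apply]
  constructor
  · rintro ⟨hε, c, hc⟩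
    refine ⟨hε, fun i => e (c i), fun x hx => ?_⟩
    obtain ⟨i, hi⟩ := hc (e.symm x) hx
    refine ⟨i, ?_⟩
    rw [map_sub, e.symm_apply_apply]
    exact hi
  · rintro ⟨hε, c, hc⟩
    refine ⟨hε, fun i => e.symm (c i), fun x hx => ?_⟩
    obtain ⟨i, hi⟩ := hc (e x) (by rw [e.symm_apply_apply]; exact hx)
    refine ⟨i, ?_⟩
    rw [map_sub, e.symm_apply_apply] at hi
    exact hi



end Stmt11Aux

theorem stmt11 (K : ℝ) (hK : 1 ≤ K) :
    ∃ c1 c2 : ℝ, 0 < c1 ∧ 0 < c2 ∧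
      ∀ (E : Type) [AddCommGroup E] [Module ℂ E] (N : ℕ), 1 ≤ N →
        Module.finrank ℂ E = N →
        ∀ nrm : E → ℝ,
          (∀ x, 0 ≤ nrm x) →
          (∀ x, nrm x = 0 ↔ x = 0) →
          (∀ (a : ℂ) (x : E), nrm (a • x) = ‖a‖ * nrm x) →
          (∀ x y : E, nrm (x + y) ≤ K * (nrm x + nrm y)) →
          ∀ k : ℕ, 0 < k →
            (k ≤ 2 * N →
              c1 ≤ entropyNumberR nrm nrm k ∧ entropyNumberR nrm nrm k ≤ c2) ∧
            (2 * N < k →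
              c1 * 2 ^ (-(((k : ℝ) - 1) / (2 * N))) ≤ entropyNumberR nrm nrm k ∧
                entropyNumberR nrm nrm k ≤ c2 * 2 ^ (-(((k : ℝ) - 1) / (2 * N)))) := by
  have hK0 : (0:ℝ) < K := lt_of_lt_of_le zero_lt_one hK
  refine ⟨1/2, 8 * K^3, by norm_num, by positivity, ?_⟩
  intro E _ _ N hN hrank nrm hpos hzero hhom htri k hk
  have hNpos : 0 < N := hN
  have hfd : FiniteDimensional ℂ E :=
    FiniteDimensional.of_finrank_pos (by omega : 0 < Module.finrank ℂ E)
  let e : E ≃ₗ[ℂ] (Fin N → ℂ) :=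
    LinearEquiv.ofFinrankEq _ _
      (by rw [hrank, Module.finrank_fintype_fun_eq_card, Fintype.card_fin])
  set nrm' : (Fin N → ℂ) → ℝ := nrm ∘ e.symm with hnrm'
  have htransfer : entropyNumberR nrm nrm k = entropyNumberR nrm' nrm' k :=
    Stmt11Aux.entropy_transfer e nrm k
  have hpos' : ∀ x, 0 ≤ nrm' x := fun x => hpos _
  have hzero' : ∀ x, nrm' x = 0 ↔ x = 0 := by
    intro x
    rw [hnrm', Function.comp_apply, hzero]
    exact LinearEquiv.map_eq_zero_iff e.symm
  have hhom' : ∀ (a : ℂ) (x : Fin N → ℂ), nrm' (a • x) = ‖a‖ * nrm' x := by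
    intro a x
    rw [hnrm', Function.comp_apply, _root_.map_smul]
    exact hhom a (e.symm x)
  have htri' : ∀ x y, nrm' (x + y) ≤ K * (nrm' x + nrm' y) := by
    intro x y
    rw [hnrm', Function.comp_apply, map_add]
    exact htri _ _
  obtain ⟨C, hC, hCup⟩ := Stmt11Aux.nrm_upper hK hpos' hzero' hhom' htri'
  obtain ⟨c, hc, hlow⟩ := Stmt11Aux.nrm_lower hNpos hK hpos' hzero' hhom' htri' hC hCup
  have hv0 : volume {x : Fin N → ℂ | nrm' x ≤ 1} ≠ 0 := (Stmt11Aux.vol_B_pos hC hCup).ne'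
  have hvt : volume {x : Fin N → ℂ | nrm' x ≤ 1} ≠ ⊤ := (Stmt11Aux.vol_B_lt_top hc hlow).ne
  have hlowbd := Stmt11Aux.entropy_lower hNpos hK hpos' hzero' hhom' htri' hC hCup hc hlow k hk
  have hupbd := Stmt11Aux.entropy_upper hNpos hK hpos' hzero' hhom' htri' hC hCup hc hlow
    hv0 hvt k hk
  rw [htransfer]
  set θ : ℝ := ((k : ℝ) - 1) / (2 * N) with hθ
  have hθ0 : 0 ≤ θ := by
    rw [hθ]
    apply div_nonneg _ (by positivity)
    have : (1:ℝ) ≤ (k:ℝ) := by exact_mod_cast hk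
    linarith
  have h2θpos : (0:ℝ) < (2:ℝ) ^ (-θ) := Real.rpow_pos_of_pos (by norm_num) _
  constructor
  · intro hkN
    constructor
    · -- 1/2 ≤ 2^(-θ) ≤ e_k
      have hθ1 : θ ≤ 1 := by
        rw [hθ, div_le_one (by positivity)]
        have : (k:ℝ) ≤ 2 * N := by exact_mod_cast hkN
        linarith
      have : (2:ℝ) ^ (-(1:ℝ)) ≤ (2:ℝ) ^ (-θ) :=
        Real.rpow_le_rpow_of_exponent_le (by norm_num) (by linarith)
      have h12 : (1/2 : ℝ) ≤ (2:ℝ) ^ (-θ) := by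
        rw [Real.rpow_neg_one] at this
        linarith
      linarith [hlowbd]
    · -- e_k ≤ 8K³ 2^(-θ) ≤ 8K³
      have h2θ1 : (2:ℝ) ^ (-θ) ≤ 1 :=
        Real.rpow_le_one_of_one_le_of_nonpos (by norm_num) (by linarith)
      calc entropyNumberR nrm' nrm' k ≤ 8 * K^3 * (2:ℝ) ^ (-θ) := hupbd
        _ ≤ 8 * K^3 * 1 := by nlinarith
        _ = 8 * K^3 := mul_one _
  · intro _
    constructor
    · calc (1/2 : ℝ) * (2:ℝ) ^ (-θ) ≤ 1 * (2:ℝ) ^ (-θ) := by nlinarith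
        _ = (2:ℝ) ^ (-θ) := one_mul _
        _ ≤ entropyNumberR nrm' nrm' k := hlowbd
    · exact hupbd
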